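/- There is a satisfiability-preserving polynomial translation from FO sentences over a signature with one unary function f and equality (with all atoms flattened to f(x) ≈ y or x ≈ y) to prenex SL(1) sentences, obtained by conjoining the axiom ∀x. alloc(x) and replacing each atom f(x) ≈ y by x ↪ y: a flattened FO sentence φ has a finite model iff its translation has a finite SL model. -/
import Mathlib


def dom1 {L : Type} (h : L → Option L) : Set L := {l | h l ≠ none}
def img1 {L : Type} (h : L → Option L) : Set L := {l | ∃ l', h l' = some l}
def elem1 {L : Type} (h : L → Option L) : Set L := dom1 h ∪ img1 h

/-- Flattened first-order formulae over one unary function symbol f and equality: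
all atoms are of the form f(x) ≈ y or x ≈ y. -/
inductive FO1 where
  | eqf (x y : ℕ)   -- f(x) ≈ y
  | eq (x y : ℕ)    -- x ≈ y
  | neg (φ : FO1)
  | conj (φ ψ : FO1)
  | ex (x : ℕ) (φ : FO1)
  | all (x : ℕ) (φ : FO1)

/-- FO satisfaction over a structure with universe D and unary function f. -/
def foSat {L : Type} (D : Set L) (f : L → L) : (ℕ → L) → FO1 → Prop
  | s, .eqf x y => f (s x) = s y
  | s, .eq x y => s x = s y
  | s, .neg φ => ¬ foSat D f s φ
  | s, .conj φ ψ => foSat D f s φ ∧ foSat D f s ψ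
  | s, .ex x φ => ∃ e ∈ D, foSat D f (Function.update s x e) φ
  | s, .all x φ => ∀ e ∈ D, foSat D f (Function.update s x e) φ

/-- SL(1) satisfaction of the translation, where each atom f(x) ≈ y has been
replaced by x ↪ y; quantifiers range over the universe. -/
def slSat {L : Type} (U : Set L) (h : L → Option L) : (ℕ → L) → FO1 → Prop
  | s, .eqf x y => h (s x) = some (s y)   -- x ↪ y
  | s, .eq x y => s x = s y
  | s, .neg φ => ¬ slSat U h s φ
  | s, .conj φ ψ => slSat U h s φ ∧ slSat U h s ψ
  | s, .ex x φ => ∃ e ∈ U, slSat U h (Function.update s x e) φ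
  | s, .all x φ => ∀ e ∈ U, slSat U h (Function.update s x e) φ

lemma fo_iff_sl {D : Set ℕ} {f : ℕ → ℕ} {h : ℕ → Option ℕ}
    (H : ∀ l ∈ D, h l = some (f l)) :
    ∀ (φ : FO1) (s : ℕ → ℕ), (∀ x, s x ∈ D) → (foSat D f s φ ↔ slSat D h s φ) := by
  intro φ
  induction φ with
  | eqf x y =>
    intro s hs
    simp only [foSat, slSat, H (s x) (hs x), Option.some.injEq]
  | eq x y => intro s hs; rfl
  | neg φ ih => intro s hs; exact not_congr (ih s hs)
  | conj φ ψ ih1 ih2 => intro s hs; exact and_congr (ih1 s hs) (ih2 s hs)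
  | ex x φ ih =>
    intro s hs
    refine exists_congr fun e => and_congr_right fun he => ih _ fun y => ?_
    rcases eq_or_ne y x with rfl | hy
    · simpa [Function.update] using he
    · simpa [Function.update, hy] using hs y
  | all x φ ih =>
    intro s hs
    refine forall_congr' fun e => imp_congr_right fun he => ih _ fun y => ?_
    rcases eq_or_ne y x with rfl | hy
    · simpa [Function.update] using he
    · simpa [Function.update, hy] using hs y

/-- a flattened FO sentence φ with one unary function has a finite
model iff its translation, conjoined with the axiom ∀x. alloc(x), has a finite
SL(1) model (countable universes encoded over ℕ). -/
theorem fo_to_sl_finite (φ : FO1) :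
    (∃ (D : Set ℕ) (f : ℕ → ℕ) (s : ℕ → ℕ),
        D.Finite ∧ D.Nonempty ∧ (∀ l ∈ D, f l ∈ D) ∧ (∀ x, s x ∈ D) ∧
        foSat D f s φ)
    ↔
    (∃ (U : Set ℕ) (h : ℕ → Option ℕ) (s : ℕ → ℕ),
        U.Finite ∧ U.Nonempty ∧ elem1 h ⊆ U ∧ (∀ x, s x ∈ U) ∧
        (∀ l ∈ U, l ∈ dom1 h) ∧   -- the axiom ∀x. alloc(x)
        slSat U h s φ) := by
  constructor
  · rintro ⟨D, f, s, hfin, hne, hf, hs, hsat⟩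
    classical
    refine ⟨D, fun l => if l ∈ D then some (f l) else none, s, hfin, hne, ?_, hs, ?_, ?_⟩
    · rintro l (hl | ⟨l', hl'⟩)
      · simp only [dom1, Set.mem_setOf_eq] at hl
        by_contra hc; simp [hc] at hl
      · by_cases hm : l' ∈ D
        · simp only [if_pos hm, Option.some.injEq] at hl'
          exact hl' ▸ hf l' hm
        · simp [if_neg hm] at hl'
    · intro l hl; simp [dom1, if_pos hl]; exact hl
    · exact (fo_iff_sl (fun l hl => by simp [if_pos hl]) φ s hs).mp hsat
  · rintro ⟨U, h, s, hfin, hne, helem, hs, halloc, hsat⟩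
    refine ⟨U, fun l => (h l).getD 0, s, hfin, hne, ?_, hs, ?_⟩
    · intro l hl
      obtain ⟨m, hm⟩ := Option.ne_none_iff_exists'.mp (halloc l hl)
      simp only [hm, Option.getD_some]
      exact helem (Or.inr ⟨l, hm⟩)
    · refine (fo_iff_sl (fun l hl => ?_) φ s hs).mpr hsat
      obtain ⟨m, hm⟩ := Option.ne_none_iff_exists'.mp (halloc l hl)
      simp [hm]
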